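/- arXiv:2006.08276 — 6 statements merged into one kernel-verified Lean document; each statement's English description precedes it below -/
import Mathlib

section
/- Let g : TM → V be a velocity output, i.e. a smooth map into a finite-dimensional vector space V that is linear on each fibre T_ξ M. Then there exists a linear map f : V → 𝔛(M) into the smooth vector fields on M satisfying f(g(η_ξ))(ξ) = η_ξ for all ξ ∈ M and η_ξ ∈ T_ξ M, if and only if g restricted to each fibre T_ξ M is injective. -/
open Manifold Bundle

open Function ContinuousLinearMap

noncomputable section PInv

variable {E V : Type*} [NormedAddCommGroup E] [NormedSpace ℝ E]
  [NormedAddCommGroup V] [NormedSpace ℝ V]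
  [FiniteDimensional ℝ E] [FiniteDimensional ℝ V]

/-- Conjugate a continuous linear map to Euclidean spaces. -/
def eucConj (B : E →L[ℝ] V) :
    EuclideanSpace ℝ (Fin (Module.finrank ℝ E)) →L[ℝ] EuclideanSpace ℝ (Fin (Module.finrank ℝ V)) :=
  (toEuclidean (E := V) : V →L[ℝ] _) ∘L B ∘L ((toEuclidean (E := E)).symm : _ →L[ℝ] E)

lemma eucConj_injective {B : E →L[ℝ] V} (hB : Injective B) : Injective (eucConj B) :=
  toEuclidean.injective.comp (hB.comp (toEuclidean (E := E)).symm.injective)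

/-- The Gram operator `A† A` of the Euclidean conjugate. -/
def gram (B : E →L[ℝ] V) :
    EuclideanSpace ℝ (Fin (Module.finrank ℝ E)) →L[ℝ] EuclideanSpace ℝ (Fin (Module.finrank ℝ E)) :=
  adjoint (eucConj B) ∘L eucConj B

lemma gram_injective {B : E →L[ℝ] V} (hB : Injective B) : Injective (gram B) := by
  intro x y hxy
  have h : ∀ z, gram B z = 0 → z = 0 := by
    intro z hz
    have h1 : inner ℝ (gram B z) z = (0 : ℝ) := by rw [hz]; simp
    rw [gram, ContinuousLinearMap.comp_apply, adjoint_inner_left] at h1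
    have : eucConj B z = 0 := by
      rwa [inner_self_eq_zero] at h1
    exact eucConj_injective hB (by simpa using this)
  have := h (x - y) (by rw [map_sub, hxy, sub_self])
  exact sub_eq_zero.mp this

/-- The inverse of an injective continuous endomorphism of a finite-dimensional space,
as a unit. -/
noncomputable def unitOfInjective {W : Type*} [NormedAddCommGroup W] [NormedSpace ℝ W]
    [FiniteDimensional ℝ W] (T : W →L[ℝ] W) (hT : Injective T) : (W →L[ℝ] W)ˣ where
  val := T
  inv := LinearMap.toContinuousLinearMap
    ((LinearEquiv.ofInjectiveEndo T.toLinearMap hT).symm : W →ₗ[ℝ] W)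
  val_inv := by
    ext w
    simp only [ContinuousLinearMap.coe_comp', Function.comp_apply,
      LinearMap.coe_toContinuousLinearMap, ContinuousLinearMap.one_apply,
      ContinuousLinearMap.mul_apply]
    exact (LinearEquiv.ofInjectiveEndo T.toLinearMap hT).apply_symm_apply w
  inv_val := by
    ext w
    simp only [ContinuousLinearMap.coe_comp', Function.comp_apply,
      LinearMap.coe_toContinuousLinearMap, ContinuousLinearMap.one_apply,
      ContinuousLinearMap.mul_apply]
    exact (LinearEquiv.ofInjectiveEndo T.toLinearMap hT).symm_apply_apply w

lemma isUnit_gram {B : E →L[ℝ] V} (hB : Injective B) : IsUnit (gram B) :=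
  ⟨unitOfInjective (gram B) (gram_injective hB), rfl⟩

/-- Moore–Penrose-style left inverse of `B`. -/
def pinv (B : E →L[ℝ] V) : V →L[ℝ] E :=
  ((toEuclidean (E := E)).symm : _ →L[ℝ] E) ∘L Ring.inverse (gram B) ∘L
    adjoint (eucConj B) ∘L (toEuclidean (E := V) : V →L[ℝ] _)

lemma pinv_apply_comp {B : E →L[ℝ] V} (hB : Injective B) (u : E) : pinv B (B u) = u := by
  have h1 : Ring.inverse (gram B) ∘L gram B = 1 := by
    have := Ring.inverse_mul_cancel _ (isUnit_gram hB)
    simpa [ContinuousLinearMap.mul_def] using this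
  have h2 : eucConj B (toEuclidean u) = toEuclidean (B u) := by
    simp [eucConj]
  have h3 : gram B (toEuclidean u) = adjoint (eucConj B) (toEuclidean (B u)) := by
    rw [gram, ContinuousLinearMap.comp_apply, h2]
  calc pinv B (B u)
      = (toEuclidean (E := E)).symm ((Ring.inverse (gram B) ∘L gram B) (toEuclidean u)) := by
        simp [pinv, ContinuousLinearMap.comp_apply, h3]
    _ = u := by rw [h1]; simp

/-- Adjoint on Euclidean spaces as an `ℝ`-linear map. -/
def adjointLM (n m : ℕ) :
    (EuclideanSpace ℝ (Fin n) →L[ℝ] EuclideanSpace ℝ (Fin m)) →ₗ[ℝ]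
      (EuclideanSpace ℝ (Fin m) →L[ℝ] EuclideanSpace ℝ (Fin n)) where
  toFun A := adjoint A
  map_add' A B := map_add _ _ _
  map_smul' c A := by
    simp only [RingHom.id_apply]
    show adjoint (c • A) = c • adjoint A
    rw [map_smulₛₗ]; simp

lemma contDiff_adjointEuc (n m : ℕ) :
    ContDiff ℝ (⊤ : ℕ∞) (fun A : EuclideanSpace ℝ (Fin n) →L[ℝ] EuclideanSpace ℝ (Fin m) =>
      adjoint A) :=
  (LinearMap.toContinuousLinearMap (adjointLM n m)).contDiff

lemma contDiff_eucConj : ContDiff ℝ (⊤ : ℕ∞) (fun B : E →L[ℝ] V => eucConj B) := by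
  have h1 := (ContinuousLinearMap.compL ℝ E V
    (EuclideanSpace ℝ (Fin (Module.finrank ℝ V)))
    ((toEuclidean (E := V) : V →L[ℝ] _))).contDiff (n := (⊤ : ℕ∞))
  have h2 := ((ContinuousLinearMap.compL ℝ (EuclideanSpace ℝ (Fin (Module.finrank ℝ E))) E
    (EuclideanSpace ℝ (Fin (Module.finrank ℝ V)))).flip
    (((toEuclidean (E := E)).symm : _ →L[ℝ] E))).contDiff (n := (⊤ : ℕ∞))
  exact (h2.comp h1 : )

lemma contDiff_adjConj :
    ContDiff ℝ (⊤ : ℕ∞) (fun B : E →L[ℝ] V => adjoint (eucConj B)) :=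
  (contDiff_adjointEuc _ _).comp contDiff_eucConj

lemma contDiff_gram : ContDiff ℝ (⊤ : ℕ∞) (fun B : E →L[ℝ] V => gram B) :=
  contDiff_adjConj.clm_comp contDiff_eucConj

lemma contDiffAt_pinv {B₀ : E →L[ℝ] V} (hB₀ : Injective B₀) :
    ContDiffAt ℝ (⊤ : ℕ∞) (fun B : E →L[ℝ] V => pinv B) B₀ := by
  have hinv : ContDiffAt ℝ (⊤ : ℕ∞) (fun B : E →L[ℝ] V => Ring.inverse (gram B)) B₀ := by
    have h1 : ContDiffAt ℝ (⊤ : ℕ∞) (Ring.inverse) (gram B₀) := by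
      exact contDiffAt_ringInverse ℝ (unitOfInjective (gram B₀) (gram_injective hB₀))
    exact h1.comp B₀ contDiff_gram.contDiffAt
  have h2 : ContDiffAt ℝ (⊤ : ℕ∞)
      (fun B : E →L[ℝ] V => adjoint (eucConj B) ∘L (toEuclidean (E := V) : V →L[ℝ] _)) B₀ := by
    exact (contDiff_adjConj.clm_comp contDiff_const).contDiffAt
  have h3 := hinv.clm_comp h2
  have h4 := (contDiffAt_const (c := ((toEuclidean (E := E)).symm : _ →L[ℝ] E))).clm_comp h3
  exact h4.congr_of_eventuallyEq (by filter_upwards with B; simp [pinv, ContinuousLinearMap.comp_assoc])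

lemma pinv_comp_equiv {E₂ : Type*} [NormedAddCommGroup E₂] [NormedSpace ℝ E₂]
    [FiniteDimensional ℝ E₂] (B : E →L[ℝ] V) (hB : Injective B) (D : E₂ ≃L[ℝ] E) :
    pinv (B ∘L (D : E₂ →L[ℝ] E)) = (D.symm : E →L[ℝ] E₂) ∘L pinv B := by
  set D' : EuclideanSpace ℝ (Fin (Module.finrank ℝ E₂)) ≃L[ℝ]
      EuclideanSpace ℝ (Fin (Module.finrank ℝ E)) :=
    (toEuclidean (E := E₂)).symm.trans (D.trans (toEuclidean (E := E))) with hD'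
  have hconj : eucConj (B ∘L (D : E₂ →L[ℝ] E)) = eucConj B ∘L (D' : _ →L[ℝ] _) := by
    ext w : 1
    simp [eucConj, hD']
  -- pointwise adjoint cancellations
  have hadj1 : ∀ y, adjoint (D'.toContinuousLinearMap)
      (adjoint (D'.symm.toContinuousLinearMap) y) = y := by
    intro y
    rw [← ContinuousLinearMap.comp_apply, ← adjoint_comp]
    have : D'.symm.toContinuousLinearMap ∘L D'.toContinuousLinearMap =
        ContinuousLinearMap.id ℝ _ := by ext w; simp
    rw [this, adjoint_id]; rfl
  have hadj2 : ∀ y, adjoint (D'.symm.toContinuousLinearMap)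
      (adjoint (D'.toContinuousLinearMap) y) = y := by
    intro y
    rw [← ContinuousLinearMap.comp_apply, ← adjoint_comp]
    have : D'.toContinuousLinearMap ∘L D'.symm.toContinuousLinearMap =
        ContinuousLinearMap.id ℝ _ := by ext w; simp
    rw [this, adjoint_id]; rfl
  set u := Ring.inverse (gram B) with hu
  have hu1 : ∀ y, u (gram B y) = y := by
    intro y
    have h := Ring.inverse_mul_cancel _ (isUnit_gram hB)
    have := DFunLike.congr_fun h y
    simpa [ContinuousLinearMap.mul_def] using this
  have hu2 : ∀ y, gram B (u y) = y := by
    intro y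
    have h := Ring.mul_inverse_cancel _ (isUnit_gram hB)
    have := DFunLike.congr_fun h y
    simpa [ContinuousLinearMap.mul_def] using this
  -- pointwise formula for the new gram operator
  have hgram : ∀ x, gram (B ∘L (D : E₂ →L[ℝ] E)) x =
      adjoint (D'.toContinuousLinearMap) (gram B (D' x)) := by
    intro x
    rw [gram, ContinuousLinearMap.comp_apply, hconj, adjoint_comp]
    simp [gram]
  set w : EuclideanSpace ℝ (Fin (Module.finrank ℝ E₂)) →L[ℝ]
      EuclideanSpace ℝ (Fin (Module.finrank ℝ E₂)) :=
    D'.symm.toContinuousLinearMap ∘L u ∘L adjoint (D'.symm.toContinuousLinearMap) with hw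
  have hwval : Ring.inverse (gram (B ∘L (D : E₂ →L[ℝ] E))) = w := by
    have hzw : gram (B ∘L (D : E₂ →L[ℝ] E)) * w = 1 := by
      ext y
      simp only [ContinuousLinearMap.mul_apply, ContinuousLinearMap.one_apply, hw,
        ContinuousLinearMap.comp_apply, ContinuousLinearEquiv.coe_coe, hgram]
      rw [D'.apply_symm_apply, hu2, hadj1]
    have hwz : w * gram (B ∘L (D : E₂ →L[ℝ] E)) = 1 := by
      ext y
      simp only [ContinuousLinearMap.mul_apply, ContinuousLinearMap.one_apply, hw,
        ContinuousLinearMap.comp_apply, ContinuousLinearEquiv.coe_coe, hgram]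
      rw [hadj2, hu1, D'.symm_apply_apply]
    exact Ring.inverse_unit ⟨_, w, hzw, hwz⟩
  ext v
  simp only [pinv, ContinuousLinearMap.comp_apply, ContinuousLinearEquiv.coe_coe, hwval, hconj,
    adjoint_comp, hw]
  rw [hadj2]
  simp [hD', hu]

end PInv

/-- Let `g : TM → V` be a velocity output (smooth, fibrewise linear,
into a finite-dimensional vector space `V`). There exists a linear map
`f : V → 𝔛(M)` into the smooth vector fields on `M` with `f(g(η_ξ))(ξ) = η_ξ` for all
tangent vectors `η_ξ`, if and only if `g` is fibrewise injective (complete). -/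
theorem stmt2
    {E' : Type*} [NormedAddCommGroup E'] [NormedSpace ℝ E']
    {H' : Type*} [TopologicalSpace H'] (J : ModelWithCorners ℝ E' H')
    {M : Type*} [TopologicalSpace M] [ChartedSpace H' M] [IsManifold J ((⊤ : ℕ∞) : WithTop ℕ∞) M]
    {V : Type*} [NormedAddCommGroup V] [NormedSpace ℝ V] [FiniteDimensional ℝ V]
    (g : TangentBundle J M → V)
    (hg_smooth : ContMDiff J.tangent 𝓘(ℝ, V) (⊤ : ℕ∞) g)
    (hg_lin : ∀ x : M, IsLinearMap ℝ (fun u : TangentSpace J x => g ⟨x, u⟩)) :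
    (∃ f : V →ₗ[ℝ] (∀ x : M, TangentSpace J x),
      (∀ v : V, ContMDiff J J.tangent (⊤ : ℕ∞)
        (fun x : M => (⟨x, f v x⟩ : TangentBundle J M))) ∧
      (∀ (x : M) (u : TangentSpace J x), f (g ⟨x, u⟩) x = u)) ↔
    (∀ x : M, Function.Injective (fun u : TangentSpace J x => g ⟨x, u⟩)) := by
  constructor
  · rintro ⟨f, -, hf⟩ x u u' huu'
    simp only at huu'
    rw [← hf x u, ← hf x u', huu']
  · intro hinj
    rcases isEmpty_or_nonempty M with hM | hM
    · exact ⟨0, fun v x => isEmptyElim x, fun x => isEmptyElim x⟩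
    obtain ⟨x₀'⟩ := hM
    haveI hfdE : FiniteDimensional ℝ E' :=
      FiniteDimensional.of_injective (IsLinearMap.mk' _ (hg_lin x₀')) (hinj x₀')
    -- the fibrewise maps as continuous linear maps `E' →L V`
    let G : M → (E' →L[ℝ] V) := fun x =>
      LinearMap.toContinuousLinearMap (IsLinearMap.mk' (fun u : E' => g ⟨x, u⟩) (hg_lin x))
    have hGapp : ∀ (x : M) (u : E'), G x u = g ⟨x, u⟩ := fun _ _ => rfl
    have hGinj : ∀ x : M, Function.Injective (G x) := fun x => hinj x
    refine ⟨{ toFun := fun v x => pinv (G x) v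
              map_add' := fun v w => by
                funext x
                show pinv (G x) (v + w) = pinv (G x) v + pinv (G x) w
                exact map_add _ _ _
              map_smul' := fun c v => by
                funext x
                show pinv (G x) (c • v) = c • pinv (G x) v
                exact map_smul _ _ _ }, ?_, ?_⟩
    swap
    · intro x u
      show pinv (G x) (g ⟨x, u⟩) = u
      rw [← hGapp x u]
      exact pinv_apply_comp (hGinj x) u
    intro v x₀
    have main : ContMDiffAt J 𝓘(ℝ, E') (⊤ : ℕ∞)
        (fun x => (trivializationAt E' (TangentSpace J) x₀ ⟨x, pinv (G x) v⟩).2) x₀ := by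
      set e := trivializationAt E' (TangentSpace J) x₀ with he
      haveI hel : e.IsLinear ℝ := by rw [he]; infer_instance
      have hx₀ : x₀ ∈ e.baseSet := FiberBundle.mem_baseSet_trivializationAt E' (TangentSpace J) x₀
      -- joint smoothness of `g` in the trivialization
      have hΦ : ContMDiffOn (J.prod 𝓘(ℝ, E')) 𝓘(ℝ, V) (⊤ : ℕ∞)
          (g ∘ e.toPartialHomeomorph.symm) e.target :=
        hg_smooth.comp_contMDiffOn e.contMDiffOn_symm
      classical
      let b : Module.Basis (Fin (Module.finrank ℝ E')) ℝ E' := Module.finBasis ℝ E'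
      have hcomp : ∀ j, ContMDiffAt J 𝓘(ℝ, V) (⊤ : ℕ∞)
          (fun x => (g ∘ e.toPartialHomeomorph.symm) (x, b j)) x₀ := by
        intro j
        have hmaps : Set.MapsTo (fun x : M => ((x, b j) : M × E')) e.baseSet e.target := by
          intro x hx
          rw [e.target_eq]
          exact ⟨hx, trivial⟩
        have h1 : ContMDiffOn J 𝓘(ℝ, V) (⊤ : ℕ∞)
            ((g ∘ e.toPartialHomeomorph.symm) ∘ (fun x : M => ((x, b j) : M × E')))
            e.baseSet :=
          hΦ.comp ((contMDiff_id.prodMk contMDiff_const).contMDiffOn) hmaps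
        exact h1.contMDiffAt (e.open_baseSet.mem_nhds hx₀)
      -- assemble into a smooth family of continuous linear maps
      let T : (Fin (Module.finrank ℝ E') → V) →L[ℝ] (E' →L[ℝ] V) :=
        LinearMap.toContinuousLinearMap
          ((LinearMap.toContinuousLinearMap :
              (E' →ₗ[ℝ] V) ≃ₗ[ℝ] (E' →L[ℝ] V)).toLinearMap.comp
            (b.constr ℝ).toLinearMap)
      let gH : M → (E' →L[ℝ] V) := fun x =>
        T (fun j => (g ∘ e.toPartialHomeomorph.symm) (x, b j))
      have hgH : ContMDiffAt J 𝓘(ℝ, E' →L[ℝ] V) (⊤ : ℕ∞) gH x₀ :=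
        T.contDiff.comp_contMDiffAt (contMDiffAt_pi_space.2 hcomp)
      -- identify `gH` with `G` composed with the trivialization equivalence
      have key : ∀ x, ∀ hx : x ∈ e.baseSet, ∃ D : E' ≃L[ℝ] E',
          gH x = (G x).comp (D : E' →L[ℝ] E') ∧
          ∀ z : E', (e ⟨x, (z : TangentSpace J x)⟩).2 = D.symm z := by
        intro x hx
        let D : E' ≃L[ℝ] E' := (e.continuousLinearEquivAt ℝ x hx).symm
        refine ⟨D, ?_, fun z => rfl⟩
        have hc : ∀ j, (fun j => (g ∘ e.toPartialHomeomorph.symm) (x, b j)) j =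
            ((G x).comp (D : E' →L[ℝ] E')).toLinearMap (b j) := by
          intro j
          show g (e.toOpenPartialHomeomorph.symm (x, b j)) = _
          rw [e.symm_apply_eq_mk_continuousLinearEquivAt_symm (R := ℝ) x hx (b j)]
          rfl
        have h2 : b.constr ℝ (fun j => (g ∘ e.toPartialHomeomorph.symm) (x, b j)) =
            ((G x).comp (D : E' →L[ℝ] E')).toLinearMap := b.constr_eq ℝ hc
        apply ContinuousLinearMap.coe_injective
        calc (↑(gH x) : E' →ₗ[ℝ] V)
            = b.constr ℝ (fun j => (g ∘ e.toPartialHomeomorph.symm) (x, b j)) := rfl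
          _ = ↑((G x).comp (D : E' →L[ℝ] E')) := h2
      obtain ⟨D₀, hD₀, -⟩ := key x₀ hx₀
      have hinjG : Function.Injective (gH x₀) := by
        rw [hD₀]
        exact ((hGinj x₀).comp D₀.injective : _)
      have h2 : ContMDiffAt J 𝓘(ℝ, V →L[ℝ] E') (⊤ : ℕ∞) (fun x => pinv (gH x)) x₀ :=
        (contDiffAt_pinv hinjG).comp_contMDiffAt hgH
      have h3 : ContMDiffAt J 𝓘(ℝ, E') (⊤ : ℕ∞) (fun x => pinv (gH x) v) x₀ :=
        h2.clm_apply contMDiffAt_const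
      refine h3.congr_of_eventuallyEq ?_
      filter_upwards [e.open_baseSet.mem_nhds hx₀] with x hx
      obtain ⟨D, hD, hD2⟩ := key x hx
      rw [hD, pinv_comp_equiv (G x) (hGinj x) D]
      exact hD2 (pinv (G x) v)
    exact (Bundle.contMDiffAt_section (F := E') (E := TangentSpace J) (s := fun x : M => pinv (G x) v) x₀).mpr main
end

section
/- Let Λ : M × V → 𝔤 be a lift for a linear system function f (so dφ_ξ Λ(ξ,v) = f(ξ,v)), fix an origin ξ̄ ∈ M, and consider the lifted system Ẋ = dL_X Λ(φ_{ξ̄}(X), v(t)) on G. If X(t) solves the lifted system with φ(X(0), ξ̄) = ξ(0), then ξ(t) := φ(X(t), ξ̄) solves ξ̇ = f(ξ, v(t)) with initial condition ξ(0); i.e. solutions of the lifted system project to solutions of the original system under φ_{ξ̄}. -/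
open Manifold

/-- Let `Λ : M × V → 𝔤` be a lift for the linear system function `f`
(`dφ_ξ Λ(ξ,v) = f(ξ,v)`), fix an origin `ξ0 ∈ M` and let `X(t)` solve the lifted system
`Ẋ = dL_X Λ(φ_{ξ0}(X), v(t))` on `G` with `φ(X(0), ξ0) = ξ(0)`. Then
`ξ(t) := φ(X(t), ξ0)` solves `ξ̇ = f(ξ, v(t))` with initial condition `ξ(0)`. -/
theorem stmt10
    {E : Type*} [NormedAddCommGroup E] [NormedSpace ℝ E]
    {H : Type*} [TopologicalSpace H] (I : ModelWithCorners ℝ E H)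
    {G : Type*} [TopologicalSpace G] [ChartedSpace H G] [Group G] [LieGroup I (⊤ : ℕ∞) G]
    {E' : Type*} [NormedAddCommGroup E'] [NormedSpace ℝ E']
    {H' : Type*} [TopologicalSpace H'] (J : ModelWithCorners ℝ E' H')
    {M : Type*} [TopologicalSpace M] [ChartedSpace H' M] [IsManifold J (⊤ : ℕ∞) M]
    {V : Type*} [NormedAddCommGroup V] [NormedSpace ℝ V]
    (φ : G → M → M)
    (hφ : ContMDiff (I.prod J) J (⊤ : ℕ∞) (fun p : G × M => φ p.1 p.2))
    (hcomp : ∀ (A B : G) (x : M), φ A (φ B x) = φ (B * A) x)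
    (hid : ∀ x : M, φ 1 x = x)
    (htrans : ∀ x y : M, ∃ A : G, φ A x = y)
    (f : V →ₗ[ℝ] (∀ x : M, TangentSpace J x))
    (Λ : M → V →ₗ[ℝ] TangentSpace I (1 : G))
    (hΛ_smooth : ContMDiff (J.prod 𝓘(ℝ, V)) 𝓘(ℝ, E) (⊤ : ℕ∞)
      (fun p : M × V => show E from Λ p.1 p.2))
    (hΛ_lift : ∀ (ξ : M) (v : V), mfderiv I J (fun A => φ A ξ) (1 : G) (Λ ξ v) = f v ξ)
    (ξ0 : M) (v : ℝ → V) (hv : Continuous v)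
    (X : ℝ → G) (hX_diff : MDifferentiable 𝓘(ℝ, ℝ) I X)
    (hX_ode : ∀ t : ℝ, mfderiv 𝓘(ℝ, ℝ) I X t (show ℝ from 1)
      = mfderiv I I (fun Y => X t * Y) (1 : G) (Λ (φ (X t) ξ0) (v t)))
    (ξinit : M) (hinit : φ (X 0) ξ0 = ξinit) :
    φ (X 0) ξ0 = ξinit ∧
    ∀ t : ℝ, mfderiv 𝓘(ℝ, ℝ) J (fun s => φ (X s) ξ0) t (show ℝ from 1) = f (v t) (φ (X t) ξ0) := by
  refine ⟨hinit, fun t => ?_⟩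
  set ξt := φ (X t) ξ0 with hξt
  have hL : ContMDiff I I (⊤ : ℕ∞) (fun Y : G => (X t)⁻¹ * Y) := contMDiff_mul_left
  have hLt : ContMDiff I I (⊤ : ℕ∞) (fun Y : G => X t * Y) := contMDiff_mul_left
  have hφξ : ContMDiff I J (⊤ : ℕ∞) (fun A : G => φ A ξt) :=
    hφ.comp (contMDiff_id.prodMk contMDiff_const)
  have hfun : (fun s => φ (X s) ξ0)
      = (fun A : G => φ A ξt) ∘ ((fun Y : G => (X t)⁻¹ * Y) ∘ X) := by
    funext s
    simp only [Function.comp, hξt]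
    rw [hcomp, mul_inv_cancel_left]
  have hXd : MDifferentiableAt 𝓘(ℝ, ℝ) I X t := hX_diff t
  have hLd : MDifferentiableAt I I (fun Y : G => (X t)⁻¹ * Y) (X t) :=
    hL.mdifferentiableAt (by simp)
  have hc1 : MDifferentiableAt 𝓘(ℝ, ℝ) I ((fun Y : G => (X t)⁻¹ * Y) ∘ X) t :=
    hLd.comp t hXd
  have hpt : ((fun Y : G => (X t)⁻¹ * Y) ∘ X) t = (1 : G) := by
    simp [Function.comp]
  have hφd : MDifferentiableAt I J (fun A : G => φ A ξt)
      (((fun Y : G => (X t)⁻¹ * Y) ∘ X) t) := hφξ.mdifferentiableAt (by simp)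
  rw [hfun, mfderiv_comp t hφd hc1,
    mfderiv_comp t hLd hXd]
  show (mfderiv I J (fun A : G => φ A ξt) (((fun Y : G => (X t)⁻¹ * Y) ∘ X) t))
      ((mfderiv I I (fun Y : G => (X t)⁻¹ * Y) (X t))
        ((mfderiv 𝓘(ℝ, ℝ) I X t) (1 : ℝ))) = f (v t) ξt
  have ho : (mfderiv 𝓘(ℝ, ℝ) I X t) (1 : ℝ)
      = mfderiv I I (fun Y => X t * Y) (1 : G) (Λ (φ (X t) ξ0) (v t)) := hX_ode t
  rw [ho]
  -- the composition of the two left-translation derivatives is the identity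
  have hkey : (mfderiv I I (fun Y : G => (X t)⁻¹ * Y) (X t)).comp
      (mfderiv I I (fun Y : G => X t * Y) (1 : G))
      = ContinuousLinearMap.id ℝ (TangentSpace I (1 : G)) := by
    have h2 : MDifferentiableAt I I (fun Y : G => (X t)⁻¹ * Y)
        ((fun Y : G => X t * Y) (1 : G)) := hL.mdifferentiableAt (by simp)
    have h3 : MDifferentiableAt I I (fun Y : G => X t * Y) (1 : G) :=
      hLt.mdifferentiableAt (by simp)
    have h := (mfderiv_comp (1 : G) h2 h3).symm
    have heq : ((fun Y : G => (X t)⁻¹ * Y) ∘ (fun Y : G => X t * Y)) = id := by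
      funext Y; simp [Function.comp]
    rw [heq, mfderiv_id] at h
    beta_reduce at h
    rw [show X t * 1 = X t from mul_one _] at h
    exact h
  have happ : (mfderiv I I (fun Y : G => (X t)⁻¹ * Y) (X t))
      ((mfderiv I I (fun Y : G => X t * Y) (1 : G)) (Λ ξt (v t)))
      = Λ ξt (v t) := by
    have := DFunLike.congr_fun hkey (Λ ξt (v t))
    exact this
  rw [happ, show mfderiv I J (fun A : G => φ A ξt) (((fun Y : G => (X t)⁻¹ * Y) ∘ X) t)
      = mfderiv I J (fun A : G => φ A ξt) (1 : G) from by rw [hpt]]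
  exact hΛ_lift ξt (v t)
end

section
/- Let 𝔣 : 𝒱 → 𝔛(M) be an equivariant linear system function (with actions φ on M and ψ on 𝒱) and Λ : M × 𝒱 → 𝔤 an equivariant lift, i.e. Ad_{X⁻¹} Λ(ξ,v) = Λ(φ_X(ξ), ψ_X(v)) for all X, ξ, v. Fix ξ̄ ∈ M and define the lifted system function F(X, v) := dL_X Λ(φ_{ξ̄}(X), v) on G. Then F is equivariant under right translation: dR_Z F(X, v) = F(XZ, ψ_Z(v)) for all X, Z ∈ G and v ∈ 𝒱. -/
open Manifold

/-- Let `𝔣 : 𝒱 → 𝔛(M)` be an equivariant linear system function and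
`Λ : M × 𝒱 → 𝔤` an equivariant lift (`Ad_{X⁻¹} Λ(ξ,v) = Λ(φ_X(ξ), ψ_X(v))`). Fix
`ξ0 ∈ M` and define the lifted system function `F(X, v) := dL_X Λ(φ_{ξ0}(X), v)` on `G`.
Then `F` is equivariant under right translation: `dR_Z F(X, v) = F(XZ, ψ_Z(v))`. -/
theorem stmt11
    {E : Type*} [NormedAddCommGroup E] [NormedSpace ℝ E]
    {H : Type*} [TopologicalSpace H] (I : ModelWithCorners ℝ E H)
    {G : Type*} [TopologicalSpace G] [ChartedSpace H G] [Group G] [LieGroup I (⊤ : ℕ∞) G]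
    {E' : Type*} [NormedAddCommGroup E'] [NormedSpace ℝ E']
    {H' : Type*} [TopologicalSpace H'] (J : ModelWithCorners ℝ E' H')
    {M : Type*} [TopologicalSpace M] [ChartedSpace H' M] [IsManifold J (⊤ : ℕ∞) M]
    {𝒱 : Type*} [AddCommGroup 𝒱] [Module ℝ 𝒱]
    (φ : G → M → M)
    (hφ : ContMDiff (I.prod J) J (⊤ : ℕ∞) (fun p : G × M => φ p.1 p.2))
    (hcomp : ∀ (A B : G) (x : M), φ A (φ B x) = φ (B * A) x)
    (hid : ∀ x : M, φ 1 x = x)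
    (htrans : ∀ x y : M, ∃ A : G, φ A x = y)
    (ψ : G → 𝒱 →ₗ[ℝ] 𝒱)
    (hψ1 : ψ 1 = LinearMap.id)
    (hψ : ∀ A B : G, (ψ A).comp (ψ B) = ψ (B * A))
    (𝔣 : 𝒱 →ₗ[ℝ] (∀ x : M, TangentSpace J x))
    (h𝔣_equiv : ∀ (X : G) (ξ : M) (v : 𝒱),
      mfderiv J J (φ X) ξ (𝔣 v ξ) = 𝔣 (ψ X v) (φ X ξ))
    (Λ : M → 𝒱 →ₗ[ℝ] TangentSpace I (1 : G))
    (hΛ_lift : ∀ (ξ : M) (v : 𝒱), mfderiv I J (fun A => φ A ξ) (1 : G) (Λ ξ v) = 𝔣 v ξ)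
    (hΛ_equiv : ∀ (X : G) (ξ : M) (v : 𝒱),
      mfderiv I I (fun Z => X⁻¹ * Z * X) (1 : G) (Λ ξ v) = Λ (φ X ξ) (ψ X v))
    (ξ0 : M)
    (F : G → 𝒱 → TangentSpace I (1 : G))
    (hF : ∀ (X : G) (v : 𝒱),
      F X v = mfderiv I I (fun Y => X * Y) (1 : G) (Λ (φ X ξ0) v)) :
    ∀ (X Z : G) (v : 𝒱),
      mfderiv I I (fun Y => Y * Z) X (F X v) = F (X * Z) (ψ Z v) := by
  intro X Z v
  have hL : ∀ (A B : G), MDifferentiableAt I I (fun Y : G => A * Y) B := fun A B =>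
    (contMDiff_mul_left (a := A)).mdifferentiableAt (n := ((⊤ : ℕ∞) : WithTop ℕ∞)) (by simp)
  have hR : ∀ (A B : G), MDifferentiableAt I I (fun Y : G => Y * B) A := fun A B =>
    (contMDiff_mul_right (a := B)).mdifferentiableAt (n := ((⊤ : ℕ∞) : WithTop ℕ∞)) (by simp)
  have hC : MDifferentiableAt I I (fun Y : G => Z⁻¹ * Y * Z) (1 : G) :=
    (((contMDiff_mul_right (a := Z)).comp
      (contMDiff_mul_left (a := Z⁻¹))).mdifferentiableAt (n := ((⊤ : ℕ∞) : WithTop ℕ∞)) (by simp))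
  set w := Λ (φ X ξ0) v with hw
  have key1 : mfderiv I I (fun Y : G => Y * Z) X (mfderiv I I (fun Y : G => X * Y) 1 w)
      = mfderiv I I (fun Y : G => X * Y * Z) 1 w := by
    have hcr := mfderiv_comp (I' := I) (1 : G)
      (f := fun Y : G => X * Y) (g := fun Y : G => Y * Z)
      (hR (X * 1) Z) (hL X 1)
    have h2 : (fun Y : G => Y * Z) ∘ (fun Y : G => X * Y) = fun Y : G => X * Y * Z := rfl
    rw [h2] at hcr
    rw [mul_one] at hcr
    exact (DFunLike.congr_fun hcr w).symm
  have key2 : mfderiv I I (fun Y : G => (X * Z) * Y) 1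
        (mfderiv I I (fun Y : G => Z⁻¹ * Y * Z) 1 w)
      = mfderiv I I (fun Y : G => X * Y * Z) 1 w := by
    have hcr := mfderiv_comp (I' := I) (1 : G)
      (f := fun Y : G => Z⁻¹ * Y * Z) (g := fun Y : G => (X * Z) * Y)
      (hL (X * Z) (Z⁻¹ * 1 * Z)) hC
    have h2 : (fun Y : G => (X * Z) * Y) ∘ (fun Y : G => Z⁻¹ * Y * Z)
        = fun Y : G => X * Y * Z := by
      funext Y; show (X * Z) * (Z⁻¹ * Y * Z) = X * Y * Z; group
    rw [h2] at hcr
    rw [show Z⁻¹ * (1 : G) * Z = 1 by group] at hcr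
    exact (DFunLike.congr_fun hcr w).symm
  have hconj := hΛ_equiv Z (φ X ξ0) v
  rw [← hw] at hconj
  rw [hF, hF, key1, ← key2, hconj, hcomp]
end

section
/- (Characterisation of equivariant lifts.) Let 𝔣 : 𝒱 → 𝔛(M) be an equivariant linear system function and fix ξ̄ ∈ M. A lift Λ of 𝔣 is equivariant if and only if there exists a map Λ_{ξ̄} : 𝒱 → 𝔤 such that (a) dφ_{ξ̄} Λ_{ξ̄}(v) = 𝔣(ξ̄, v) for all v ∈ 𝒱, and (b) Ad_{S⁻¹} Λ_{ξ̄}(v) = Λ_{ξ̄}(ψ_S(v)) for all S ∈ stab_φ(ξ̄) and v ∈ 𝒱; in that case Λ is given by Λ(φ_X(ξ̄), v) = Ad_{X⁻¹} Λ_{ξ̄}(ψ_{X⁻¹}(v)), which is well defined independently of the choice of X with φ_X(ξ̄) = ξ. -/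
open Manifold

lemma adComp
    {E : Type*} [NormedAddCommGroup E] [NormedSpace ℝ E]
    {H : Type*} [TopologicalSpace H] (I : ModelWithCorners ℝ E H)
    {G : Type*} [TopologicalSpace G] [ChartedSpace H G] [Group G] [LieGroup I ((⊤ : ℕ∞) : WithTop ℕ∞) G]
    (X Y : G) (w : TangentSpace I (1 : G)) :
    mfderiv I I (fun Z => X⁻¹ * Z * X) (1 : G)
      (mfderiv I I (fun Z => Y⁻¹ * Z * Y) (1 : G) w)
    = mfderiv I I (fun Z => (Y*X)⁻¹ * Z * (Y*X)) (1 : G) w := by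
  have hs : ∀ S : G, ContMDiff I I ((⊤ : ℕ∞) : WithTop ℕ∞) (fun Z : G => S⁻¹ * Z * S) := fun S =>
    (contMDiff_const.mul contMDiff_id).mul contMDiff_const
  have h1 : (fun Z : G => Y⁻¹ * Z * Y) 1 = 1 := by simp
  have comp := mfderiv_comp (I' := I) (1 : G)
    (by simpa [h1] using ((hs X).mdifferentiableAt (by simp) :
        MDifferentiableAt I I (fun Z : G => X⁻¹ * Z * X) 1))
    ((hs Y).mdifferentiableAt (by simp))
  have hfun : ((fun Z : G => X⁻¹ * Z * X) ∘ (fun Z : G => Y⁻¹ * Z * Y))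
      = fun Z : G => (Y*X)⁻¹ * Z * (Y*X) := by
    funext Z; simp [Function.comp, mul_assoc]
  rw [hfun] at comp
  have hpt : mfderiv I I (fun Z : G => X⁻¹ * Z * X) (Y⁻¹ * 1 * Y)
      = mfderiv I I (fun Z : G => X⁻¹ * Z * X) (1 : G) :=
    congrArg _ (by simp)
  rw [comp, hpt]
  rfl

/-- (Characterisation of equivariant lifts.) Let `𝔣 : 𝒱 → 𝔛(M)` be an
equivariant linear system function and `Λ` a lift of `𝔣`, with origin `ξ0 ∈ M`. Then `Λ`
is equivariant iff there is `Λ₀ : 𝒱 → 𝔤` with (a) `dφ_{ξ0} Λ₀(v) = 𝔣(ξ0, v)` and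
(b) `Ad_{S⁻¹} Λ₀(v) = Λ₀(ψ_S(v))` for all `S ∈ stab_φ(ξ0)`; in that case
`Λ(φ_X(ξ0), v) = Ad_{X⁻¹} Λ₀(ψ_{X⁻¹}(v))` (well defined independently of the choice of
`X` with `φ_X(ξ0) = ξ`). -/
theorem stmt12
    {E : Type*} [NormedAddCommGroup E] [NormedSpace ℝ E]
    {H : Type*} [TopologicalSpace H] (I : ModelWithCorners ℝ E H)
    {G : Type*} [TopologicalSpace G] [ChartedSpace H G] [Group G] [LieGroup I ((⊤ : ℕ∞) : WithTop ℕ∞) G]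
    {E' : Type*} [NormedAddCommGroup E'] [NormedSpace ℝ E']
    {H' : Type*} [TopologicalSpace H'] (J : ModelWithCorners ℝ E' H')
    {M : Type*} [TopologicalSpace M] [ChartedSpace H' M] [IsManifold J ((⊤ : ℕ∞) : WithTop ℕ∞) M]
    {𝒱 : Type*} [AddCommGroup 𝒱] [Module ℝ 𝒱]
    (φ : G → M → M)
    (hφ : ContMDiff (I.prod J) J (⊤ : ℕ∞) (fun p : G × M => φ p.1 p.2))
    (hcomp : ∀ (A B : G) (x : M), φ A (φ B x) = φ (B * A) x)
    (hid : ∀ x : M, φ 1 x = x)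
    (htrans : ∀ x y : M, ∃ A : G, φ A x = y)
    (ψ : G → 𝒱 →ₗ[ℝ] 𝒱)
    (hψ1 : ψ 1 = LinearMap.id)
    (hψ : ∀ A B : G, (ψ A).comp (ψ B) = ψ (B * A))
    (𝔣 : 𝒱 →ₗ[ℝ] (∀ x : M, TangentSpace J x))
    (h𝔣_equiv : ∀ (X : G) (ξ : M) (v : 𝒱),
      mfderiv J J (φ X) ξ (𝔣 v ξ) = 𝔣 (ψ X v) (φ X ξ))
    (ξ0 : M)
    (Λ : M → 𝒱 →ₗ[ℝ] TangentSpace I (1 : G))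
    (hΛ_lift : ∀ (ξ : M) (v : 𝒱),
      mfderiv I J (fun A => φ A ξ) (1 : G) (Λ ξ v) = 𝔣 v ξ) :
    (∀ (X : G) (ξ : M) (v : 𝒱),
        mfderiv I I (fun Z => X⁻¹ * Z * X) (1 : G) (Λ ξ v) = Λ (φ X ξ) (ψ X v)) ↔
    (∃ Λ₀ : 𝒱 →ₗ[ℝ] TangentSpace I (1 : G),
      (∀ v : 𝒱, mfderiv I J (fun A => φ A ξ0) (1 : G) (Λ₀ v) = 𝔣 v ξ0) ∧
      (∀ S : G, φ S ξ0 = ξ0 → ∀ v : 𝒱,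
        mfderiv I I (fun Z => S⁻¹ * Z * S) (1 : G) (Λ₀ v) = Λ₀ (ψ S v)) ∧
      (∀ (X : G) (v : 𝒱),
        Λ (φ X ξ0) v
          = mfderiv I I (fun Z => X⁻¹ * Z * X) (1 : G) (Λ₀ (ψ X⁻¹ v)))) := by
  constructor
  · intro hEq
    refine ⟨Λ ξ0, hΛ_lift ξ0, ?_, ?_⟩
    · intro S hS v
      have h := hEq S ξ0 v
      rwa [hS] at h
    · intro X v
      have h := hEq X ξ0 (ψ X⁻¹ v)
      have hv : ψ X (ψ X⁻¹ v) = v := by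
        rw [← LinearMap.comp_apply, hψ X X⁻¹, inv_mul_cancel, hψ1]; rfl
      rw [hv] at h
      exact h.symm
  · rintro ⟨Λ₀, _, _, hc⟩ X ξ v
    obtain ⟨Y, hY⟩ := htrans ξ0 ξ
    have hvv : ψ (Y * X)⁻¹ (ψ X v) = ψ Y⁻¹ v := by
      rw [← LinearMap.comp_apply, hψ (Y * X)⁻¹ X]
      congr 1
      group
    rw [← hY, hc Y v, hcomp X Y ξ0, hc (Y * X) (ψ X v), hvv]
    exact adComp I X Y (Λ₀ (ψ Y⁻¹ v))
end

section
/- (No invariant error on the state space for non-free actions.) Let G be a group, φ : G × M → M an effective and transitive right action on a set M, and φ' : G × 𝒢 → 𝒢 a transitive right action on a set 𝒢. Suppose e : 𝒢 × M → M is an error function such that each partial map e_{X̂} : M → M, ξ ↦ e(X̂, ξ), is a bijection, and e is invariant: e(φ'_A(X̂), φ_A(ξ)) = e(X̂, ξ) for all A ∈ G. Then the action φ' is free (every stabilizer stab_{φ'}(X̂) is trivial), and hence for any X̂ the map A ↦ φ'_A(X̂) is a bijection from G onto 𝒢. -/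
/-- Let `φ` be an effective and transitive right action of `G` on `M`,
and `φ'` a transitive right action of `G` on `𝒢`. If `e : 𝒢 × M → M` has bijective
partial maps `e_{X̂}` and is invariant, then `φ'` is free (all its stabilizers are
trivial), and hence for any `X̂` the map `A ↦ φ'(A, X̂)` is a bijection from `G` onto `𝒢`. -/
theorem stmt17 {G : Type*} [Group G] {M 𝒢 : Type*}
    (φ : G → M → M)
    (hcomp : ∀ (A B : G) (x : M), φ A (φ B x) = φ (B * A) x)
    (hid : ∀ x : M, φ 1 x = x)
    (htrans : ∀ x y : M, ∃ A : G, φ A x = y)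
    (heff : ∀ A : G, (∀ ξ : M, φ A ξ = ξ) → A = 1)
    (φ' : G → 𝒢 → 𝒢)
    (hcomp' : ∀ (A B : G) (x : 𝒢), φ' A (φ' B x) = φ' (B * A) x)
    (hid' : ∀ x : 𝒢, φ' 1 x = x)
    (htrans' : ∀ x y : 𝒢, ∃ A : G, φ' A x = y)
    (e : 𝒢 → M → M)
    (hbij : ∀ Xhat : 𝒢, Function.Bijective (fun ξ : M => e Xhat ξ))
    (hinv : ∀ (A : G) (Xhat : 𝒢) (ξ : M), e (φ' A Xhat) (φ A ξ) = e Xhat ξ) :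
    (∀ (Xhat : 𝒢) (Z : G), φ' Z Xhat = Xhat → Z = 1) ∧
    (∀ Xhat : 𝒢, Function.Bijective (fun A : G => φ' A Xhat)) := by
  have hfree : ∀ (Xhat : 𝒢) (Z : G), φ' Z Xhat = Xhat → Z = 1 := by
    intro Xhat Z hZ
    apply heff
    intro ξ
    have h := hinv Z Xhat ξ
    rw [hZ] at h
    exact (hbij Xhat).1 h
  refine ⟨hfree, fun Xhat => ⟨?_, fun Y => htrans' Xhat Y⟩⟩
  intro A B hAB
  simp only at hAB
  have h1 : φ' (A * B⁻¹) Xhat = Xhat := by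
    rw [← hcomp', hAB, hcomp', mul_inv_cancel, hid']
  exact mul_inv_eq_one.mp (hfree Xhat _ h1)
end

section
/- (Equivariant error dynamics.) Under the assumptions of the group error dynamics, suppose additionally that Λ is an equivariant lift: Ad_{X⁻¹} Λ(ξ,v) = Λ(φ_X(ξ), ψ_X(v)) for all X, ξ, v. Then the state error e(t) = φ(E(t), ξ̄) = φ(X̂(t)⁻¹, ξ(t)) with ξ = φ(X, ξ̄) satisfies ė = dφ_e( Λ(e, ψ_{X̂⁻¹}(v)) − Λ(ξ̄, ψ_{X̂⁻¹}(v)) ) − dφ_e Δ, i.e. the error dynamics depend on the error e only through e itself and the transformed input w = ψ_{X̂⁻¹}(v), apart from the innovation term. -/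
open Manifold
set_option linter.unusedSectionVars false
set_option maxHeartbeats 1000000

section Helpers

variable {E : Type*} [NormedAddCommGroup E] [NormedSpace ℝ E]
    {H : Type*} [TopologicalSpace H] (I : ModelWithCorners ℝ E H)
    {G : Type*} [TopologicalSpace G] [ChartedSpace H G] [Group G] [LieGroup I (⊤ : ℕ∞) G]
    {E' : Type*} [NormedAddCommGroup E'] [NormedSpace ℝ E']
    {H' : Type*} [TopologicalSpace H'] (J : ModelWithCorners ℝ E' H')
    {M : Type*} [TopologicalSpace M] [ChartedSpace H' M] [IsManifold J (⊤ : ℕ∞) M]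

lemma aux_mfderiv_inv_one_apply (u : E) :
    mfderiv I I (fun g : G => g⁻¹) (1 : G) u = -u := by
  have hinv : ContMDiff I I (⊤ : ℕ∞) (fun g : G => g⁻¹) := contMDiff_inv I (⊤ : ℕ∞)
  have hmul : ContMDiff (I.prod I) I (⊤ : ℕ∞) (fun p : G × G => p.1 * p.2) := contMDiff_mul I (⊤ : ℕ∞)
  have h1 : (fun g : G => g * g⁻¹) = fun _ : G => (1 : G) := by
    funext g; simp
  have hpair : MDifferentiableAt I (I.prod I) (fun g : G => (g, g⁻¹)) (1 : G) :=
    mdifferentiableAt_id.prodMk ((hinv (1 : G)).mdifferentiableAt (by simp))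
  have hcomp : mfderiv I I (fun g : G => g * g⁻¹) (1 : G)
      = (mfderiv (I.prod I) I (fun p : G × G => p.1 * p.2) ((1 : G), (1 : G)⁻¹)).comp
        (mfderiv I (I.prod I) (fun g : G => (g, g⁻¹)) (1 : G)) :=
    mfderiv_comp (I := I) (I' := I.prod I) (I'' := I)
      (g := fun p : G × G => p.1 * p.2) (f := fun g : G => (g, g⁻¹)) (1 : G)
      ((hmul ((1 : G), (1 : G)⁻¹)).mdifferentiableAt (by simp)) hpair
  have hzero : mfderiv I I (fun g : G => g * g⁻¹) (1 : G) u = 0 := by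
    rw [h1, mfderiv_const]; rfl
  have hpair' : mfderiv I (I.prod I) (fun g : G => (g, g⁻¹)) (1 : G) u
      = (u, mfderiv I I (fun g : G => g⁻¹) (1 : G) u) := by
    rw [MDifferentiableAt.mfderiv_prod (f := fun g : G => g) (g := fun g : G => g⁻¹)
      mdifferentiableAt_id ((hinv (1 : G)).mdifferentiableAt (by simp))]
    have hid : mfderiv I I (fun g : G => g) (1 : G) = ContinuousLinearMap.id ℝ E := mfderiv_id
    rw [hid]; rfl
  have hadd : ∀ w : E × E,
      mfderiv (I.prod I) I (fun p : G × G => p.1 * p.2) ((1 : G), (1 : G)⁻¹) w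
        = w.1 + w.2 := by
    intro w
    have h := mfderiv_prod_eq_add_apply (I := I) (I' := I) (I'' := I)
      (f := fun p : G × G => p.1 * p.2) (p := ((1 : G), (1 : G)⁻¹)) (v := w)
      ((hmul ((1 : G), (1 : G)⁻¹)).mdifferentiableAt (by simp))
    have e1 : (fun z : G => z * (1 : G)⁻¹) = fun z => z := by funext z; simp
    have e2 : (fun z : G => (1 : G) * z) = fun z => z := by funext z; simp
    rw [e1, e2] at h
    have hid : mfderiv I I (fun g : G => g) (1 : G) = ContinuousLinearMap.id ℝ E := mfderiv_id
    have hid' : mfderiv I I (fun g : G => g) ((1 : G)⁻¹) = ContinuousLinearMap.id ℝ E :=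
      mfderiv_id
    rw [hid, hid'] at h
    exact h
  have key : mfderiv (I.prod I) I (fun p : G × G => p.1 * p.2) ((1 : G), (1 : G)⁻¹)
      (mfderiv I (I.prod I) (fun g : G => (g, g⁻¹)) (1 : G) u) = 0 := by
    rw [← hzero, hcomp]; rfl
  rw [hpair'] at key; replace key := (hadd _).symm.trans key
  exact eq_neg_of_add_eq_zero_right key

lemma aux_collapse (f : G → M) (σ : G → G) (a : G) (ha : σ 1 = a)
    (hf : MDifferentiableAt I J f a) (hσ : MDifferentiableAt I I σ (1 : G)) (u : E) :
    mfderiv I J f a (mfderiv I I σ (1 : G) u) = mfderiv I J (fun Z => f (σ Z)) (1 : G) u := by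
  subst ha
  have h := mfderiv_comp (I := I) (I' := I) (I'' := J) (g := f) (f := σ) (1 : G) hf hσ
  exact (DFunLike.congr_fun h u).symm

lemma aux_congr {f g : G → M} (h : ∀ z, f z = g z) (x : G) (u : E) :
    mfderiv I J f x u = mfderiv I J g x u := by
  have hfg : f = g := funext h
  rw [hfg]

end Helpers

/-- (Equivariant error dynamics.) Under the assumptions of the group
error dynamics, if moreover `Λ` is an equivariant lift
(`Ad_{X⁻¹} Λ(ξ,v) = Λ(φ_X(ξ), ψ_X(v))`), then the state error
`e(t) = φ(X̂(t)⁻¹, ξ(t))`, `ξ = φ(X, ξ0)`, satisfies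
`ė = dφ_e( Λ(e, ψ_{X̂⁻¹}(v)) − Λ(ξ0, ψ_{X̂⁻¹}(v)) ) − dφ_e Δ`. -/
theorem stmt19
    {E : Type*} [NormedAddCommGroup E] [NormedSpace ℝ E]
    {H : Type*} [TopologicalSpace H] (I : ModelWithCorners ℝ E H)
    {G : Type*} [TopologicalSpace G] [ChartedSpace H G] [Group G] [LieGroup I (⊤ : ℕ∞) G]
    {E' : Type*} [NormedAddCommGroup E'] [NormedSpace ℝ E']
    {H' : Type*} [TopologicalSpace H'] (J : ModelWithCorners ℝ E' H')
    {M : Type*} [TopologicalSpace M] [ChartedSpace H' M] [IsManifold J (⊤ : ℕ∞) M]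
    {𝒱 : Type*} [AddCommGroup 𝒱] [Module ℝ 𝒱]
    (φ : G → M → M)
    (hφ : ContMDiff (I.prod J) J (⊤ : ℕ∞) (fun p : G × M => φ p.1 p.2))
    (hcomp : ∀ (A B : G) (x : M), φ A (φ B x) = φ (B * A) x)
    (hid : ∀ x : M, φ 1 x = x)
    (htrans : ∀ x y : M, ∃ A : G, φ A x = y)
    (ψ : G → 𝒱 →ₗ[ℝ] 𝒱)
    (hψ1 : ψ 1 = LinearMap.id)
    (hψ : ∀ A B : G, (ψ A).comp (ψ B) = ψ (B * A))
    (ξ0 : M)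
    (Λ : M → 𝒱 →ₗ[ℝ] TangentSpace I (1 : G))
    (hΛ_equiv : ∀ (X : G) (ξ : M) (v : 𝒱),
      mfderiv I I (fun Z => X⁻¹ * Z * X) (1 : G) (Λ ξ v) = Λ (φ X ξ) (ψ X v))
    (v : 𝒱) (Δ : TangentSpace I (1 : G))
    (X Xhat : ℝ → G)
    (hX_diff : MDifferentiable 𝓘(ℝ, ℝ) I X)
    (hXhat_diff : MDifferentiable 𝓘(ℝ, ℝ) I Xhat)
    (hX_ode : ∀ t : ℝ, mfderiv 𝓘(ℝ, ℝ) I X t (show ℝ from 1)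
      = mfderiv I I (fun Y => X t * Y) (1 : G) (Λ (φ (X t) ξ0) v))
    (hXhat_ode : ∀ t : ℝ, mfderiv 𝓘(ℝ, ℝ) I Xhat t (show ℝ from 1)
      = (show E from mfderiv I I (fun Y => Xhat t * Y) (1 : G) (Λ (φ (Xhat t) ξ0) v))
        + (show E from mfderiv I I (fun Y => Y * Xhat t) (1 : G) Δ))
    (e : ℝ → M) (he : ∀ t : ℝ, e t = φ (Xhat t)⁻¹ (φ (X t) ξ0)) :
    ∀ t : ℝ, mfderiv 𝓘(ℝ, ℝ) J e t (show ℝ from 1)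
      = (show E' from mfderiv I J (fun A => φ A (e t)) (1 : G)
          (Λ (e t) (ψ (Xhat t)⁻¹ v) - Λ ξ0 (ψ (Xhat t)⁻¹ v)))
        - (show E' from mfderiv I J (fun A => φ A (e t)) (1 : G) Δ) := by
  intro t
  set A := X t with hA
  set B := Xhat t with hB
  -- basic smoothness facts
  have hφx : ∀ x : M, ContMDiff I J (⊤ : ℕ∞) (fun g : G => φ g x) := fun x =>
    hφ.comp (contMDiff_id.prodMk contMDiff_const)
  have hφM : ∀ g : G, ContMDiff J J (⊤ : ℕ∞) (φ g) := fun g =>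
    hφ.comp (contMDiff_const.prodMk contMDiff_id)
  have hgsm : ∀ (f : G → G), ContMDiff I I (⊤ : ℕ∞) f →
      ∀ x : M, ContMDiff I J (⊤ : ℕ∞) (fun Z : G => φ (f Z) x) := fun f hf x => (hφx x).comp hf
  have hF : ContMDiff (I.prod I) J (⊤ : ℕ∞) (fun p : G × G => φ p.2⁻¹ (φ p.1 ξ0)) :=
    hφ.comp ((contMDiff_snd.inv).prodMk (hφ.comp (contMDiff_fst.prodMk contMDiff_const)))
  -- canonical maps
  set q : G → M := fun Z => φ (A * Z * B⁻¹) ξ0 with hq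
  set r : G → M := fun Z => φ (A * B⁻¹ * Z) ξ0 with hr
  have hqsm : ContMDiff I J (⊤ : ℕ∞) q :=
    hgsm _ ((contMDiff_const.mul contMDiff_id).mul contMDiff_const) ξ0
  have hrsm : ContMDiff I J (⊤ : ℕ∞) r :=
    hgsm _ (contMDiff_const.mul contMDiff_id) ξ0
  -- unwrapped ODEs
  have hXo : mfderiv 𝓘(ℝ, ℝ) I X t (1 : ℝ)
      = mfderiv I I (fun Y => A * Y) (1 : G) (Λ (φ A ξ0) v) := hX_ode t
  have hXho : mfderiv 𝓘(ℝ, ℝ) I Xhat t (1 : ℝ)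
      = @HAdd.hAdd E E E instHAdd
          (mfderiv I I (fun Y => B * Y) (1 : G) (Λ (φ B ξ0) v))
          (mfderiv I I (fun Y => Y * B) (1 : G) Δ) := hXhat_ode t
  -- Step 1: derivative of e through the two-variable map
  have h1 : mfderiv 𝓘(ℝ, ℝ) J e t (1 : ℝ)
      = mfderiv (I.prod I) J (fun p : G × G => φ p.2⁻¹ (φ p.1 ξ0)) (A, B)
          (mfderiv 𝓘(ℝ, ℝ) I X t (1 : ℝ), mfderiv 𝓘(ℝ, ℝ) I Xhat t (1 : ℝ)) := by
    have he'' : e = fun s => (fun p : G × G => φ p.2⁻¹ (φ p.1 ξ0)) (X s, Xhat s) :=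
      funext fun s => he s
    rw [he'']
    have hc := mfderiv_comp (I := 𝓘(ℝ, ℝ)) (I' := I.prod I) (I'' := J)
      (g := fun p : G × G => φ p.2⁻¹ (φ p.1 ξ0)) (f := fun s => (X s, Xhat s)) t
      ((hF (A, B)).mdifferentiableAt (by simp)) ((hX_diff t).prodMk (hXhat_diff t))
    have hap := DFunLike.congr_fun hc (1 : ℝ)
    refine hap.trans ?_
    show mfderiv (I.prod I) J _ (A, B)
        (mfderiv 𝓘(ℝ, ℝ) (I.prod I) (fun s => (X s, Xhat s)) t (1 : ℝ)) = _
    have hp : mfderiv 𝓘(ℝ, ℝ) (I.prod I) (fun s => (X s, Xhat s)) t (1 : ℝ)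
        = (mfderiv 𝓘(ℝ, ℝ) I X t (1 : ℝ), mfderiv 𝓘(ℝ, ℝ) I Xhat t (1 : ℝ)) := by
      rw [MDifferentiableAt.mfderiv_prod (hX_diff t) (hXhat_diff t)]; rfl
    rw [hp]; rfl
  -- Step 2: sum of partial derivatives
  have h2 : mfderiv (I.prod I) J (fun p : G × G => φ p.2⁻¹ (φ p.1 ξ0)) (A, B)
        (mfderiv 𝓘(ℝ, ℝ) I X t (1 : ℝ), mfderiv 𝓘(ℝ, ℝ) I Xhat t (1 : ℝ))
      = mfderiv I J (fun z : G => φ B⁻¹ (φ z ξ0)) A (mfderiv 𝓘(ℝ, ℝ) I X t (1 : ℝ))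
        + mfderiv I J (fun z : G => φ z⁻¹ (φ A ξ0)) B
            (mfderiv 𝓘(ℝ, ℝ) I Xhat t (1 : ℝ)) :=
    mfderiv_prod_eq_add_apply ((hF (A, B)).mdifferentiableAt (by simp))
  -- Step 3: first partial term
  have h3 : mfderiv I J (fun z : G => φ B⁻¹ (φ z ξ0)) A (mfderiv 𝓘(ℝ, ℝ) I X t (1 : ℝ))
      = mfderiv I J q (1 : G) (Λ (φ A ξ0) v) := by
    rw [hXo]
    have hsm1 : ContMDiff I J (⊤ : ℕ∞) (fun z : G => φ B⁻¹ (φ z ξ0)) :=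
      (hφM B⁻¹).comp (hφx ξ0)
    have hc := aux_collapse I J (fun z : G => φ B⁻¹ (φ z ξ0)) (fun Y : G => A * Y) A
      (mul_one A) ((hsm1 A).mdifferentiableAt (by simp))
      (((contMDiff_const.mul contMDiff_id) (1 : G)).mdifferentiableAt (n := ((⊤ : ℕ∞) : WithTop ℕ∞)) (by simp))
      (Λ (φ A ξ0) v)
    refine hc.trans ?_
    refine aux_congr I J (f := fun Z : G => φ B⁻¹ (φ (A * Z) ξ0)) (g := q) ?_ (1 : G) _
    intro Z
    show φ B⁻¹ (φ (A * Z) ξ0) = φ (A * Z * B⁻¹) ξ0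
    exact hcomp B⁻¹ (A * Z) ξ0
  -- Step 4: second partial term
  have hsm2 : ContMDiff I J (⊤ : ℕ∞) (fun z : G => φ z⁻¹ (φ A ξ0)) :=
    (hφx (φ A ξ0)).comp (contMDiff_inv I (⊤ : ℕ∞))
  have hb1 : mfderiv I J (fun z : G => φ z⁻¹ (φ A ξ0)) B
        (mfderiv I I (fun Y => B * Y) (1 : G) (Λ (φ B ξ0) v))
      = -(mfderiv I J q (1 : G) (Λ (φ B ξ0) v)) := by
    have hc := aux_collapse I J (fun z : G => φ z⁻¹ (φ A ξ0)) (fun Y : G => B * Y) B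
      (mul_one B) ((hsm2 B).mdifferentiableAt (by simp))
      (((contMDiff_const.mul contMDiff_id) (1 : G)).mdifferentiableAt (n := ((⊤ : ℕ∞) : WithTop ℕ∞)) (by simp))
      (Λ (φ B ξ0) v)
    refine hc.trans ?_
    have hfun : ∀ Z : G, φ (B * Z)⁻¹ (φ A ξ0) = q Z⁻¹ := by
      intro Z
      show _ = φ (A * Z⁻¹ * B⁻¹) ξ0
      rw [hcomp]
      exact congrArg (fun g => φ g ξ0) (by group)
    refine (aux_congr I J (f := fun Z : G => φ (B * Z)⁻¹ (φ A ξ0)) (g := fun Z => q Z⁻¹)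
      hfun (1 : G) _).trans ?_
    have hc2 := aux_collapse I J q (fun Z : G => Z⁻¹) (1 : G) inv_one
      ((hqsm (1 : G)).mdifferentiableAt (by simp))
      (((contMDiff_inv I (⊤ : ℕ∞)) (1 : G)).mdifferentiableAt (by simp)) (Λ (φ B ξ0) v)
    rw [← hc2]
    exact (congrArg (mfderiv I J q (1 : G)) (aux_mfderiv_inv_one_apply I _)).trans (map_neg _ _)
  have hb2 : mfderiv I J (fun z : G => φ z⁻¹ (φ A ξ0)) B
        (mfderiv I I (fun Y => Y * B) (1 : G) Δ)
      = -(mfderiv I J r (1 : G) Δ) := by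
    have hc := aux_collapse I J (fun z : G => φ z⁻¹ (φ A ξ0)) (fun Y : G => Y * B) B
      (one_mul B) ((hsm2 B).mdifferentiableAt (by simp))
      (((contMDiff_id.mul contMDiff_const) (1 : G)).mdifferentiableAt (n := ((⊤ : ℕ∞) : WithTop ℕ∞)) (by simp)) Δ
    refine hc.trans ?_
    have hfun : ∀ Z : G, φ (Z * B)⁻¹ (φ A ξ0) = r Z⁻¹ := by
      intro Z
      show _ = φ (A * B⁻¹ * Z⁻¹) ξ0
      rw [hcomp]
      exact congrArg (fun g => φ g ξ0) (by group)
    refine (aux_congr I J (f := fun Z : G => φ (Z * B)⁻¹ (φ A ξ0)) (g := fun Z => r Z⁻¹)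
      hfun (1 : G) _).trans ?_
    have hc2 := aux_collapse I J r (fun Z : G => Z⁻¹) (1 : G) inv_one
      ((hrsm (1 : G)).mdifferentiableAt (by simp))
      (((contMDiff_inv I (⊤ : ℕ∞)) (1 : G)).mdifferentiableAt (by simp)) Δ
    rw [← hc2]
    exact (congrArg (mfderiv I J r (1 : G)) (aux_mfderiv_inv_one_apply I _)).trans (map_neg _ _)
  have h4 : mfderiv I J (fun z : G => φ z⁻¹ (φ A ξ0)) B
        (mfderiv 𝓘(ℝ, ℝ) I Xhat t (1 : ℝ))
      = mfderiv I J (fun z : G => φ z⁻¹ (φ A ξ0)) B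
          (mfderiv I I (fun Y => B * Y) (1 : G) (Λ (φ B ξ0) v))
        + mfderiv I J (fun z : G => φ z⁻¹ (φ A ξ0)) B
          (mfderiv I I (fun Y => Y * B) (1 : G) Δ) := by
    rw [hXho]
    exact (mfderiv I J (fun z : G => φ z⁻¹ (φ A ξ0)) B).map_add _ _
  -- RHS: rewrite via equivariance
  have hξ0eq : φ B⁻¹ (φ B ξ0) = ξ0 := by
    rw [hcomp]
    have hBB : B * B⁻¹ = 1 := by group
    rw [hBB]; exact hid ξ0
  have hE1 : Λ (e t) (ψ B⁻¹ v)
      = mfderiv I I (fun Z => B⁻¹⁻¹ * Z * B⁻¹) (1 : G) (Λ (φ A ξ0) v) := by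
    rw [he t]
    exact (hΛ_equiv B⁻¹ (φ A ξ0) v).symm
  have hE2 : Λ ξ0 (ψ B⁻¹ v)
      = mfderiv I I (fun Z => B⁻¹⁻¹ * Z * B⁻¹) (1 : G) (Λ (φ B ξ0) v) := by
    have h := hΛ_equiv B⁻¹ (φ B ξ0) v
    rw [hξ0eq] at h
    exact h.symm
  -- RHS collapse
  have hconjsm : ContMDiff I I (⊤ : ℕ∞) (fun Z : G => B⁻¹⁻¹ * Z * B⁻¹) :=
    (contMDiff_const.mul contMDiff_id).mul contMDiff_const
  have hΨsm : ContMDiff I J (⊤ : ℕ∞) (fun A' : G => φ A' (e t)) := hφx (e t)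
  have hΨq : ∀ Z : G, φ (B⁻¹⁻¹ * Z * B⁻¹) (e t) = q Z := by
    intro Z
    show _ = φ (A * Z * B⁻¹) ξ0
    rw [he t, hcomp, hcomp]
    exact congrArg (fun g => φ g ξ0) (by simp only [← hA, ← hB]; group)
  have hΨr : ∀ A' : G, φ A' (e t) = r A' := by
    intro A'
    show _ = φ (A * B⁻¹ * A') ξ0
    rw [he t, hcomp, hcomp]
    exact congrArg (fun g => φ g ξ0) (by simp only [← hA, ← hB]; group)
  have hR : ∀ u : E, mfderiv I J (fun A' : G => φ A' (e t)) (1 : G)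
        (mfderiv I I (fun Z => B⁻¹⁻¹ * Z * B⁻¹) (1 : G) u)
      = mfderiv I J q (1 : G) u := by
    intro u
    have hc := aux_collapse I J (fun A' : G => φ A' (e t)) (fun Z : G => B⁻¹⁻¹ * Z * B⁻¹)
      (1 : G) (by group) ((hΨsm (1 : G)).mdifferentiableAt (by simp))
      ((hconjsm (1 : G)).mdifferentiableAt (by simp)) u
    refine hc.trans ?_
    exact aux_congr I J (f := fun Z : G => φ (B⁻¹⁻¹ * Z * B⁻¹) (e t)) (g := q) hΨq (1 : G) u
  have hRδ : mfderiv I J (fun A' : G => φ A' (e t)) (1 : G) Δ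
      = mfderiv I J r (1 : G) Δ :=
    aux_congr I J (f := fun A' : G => φ A' (e t)) (g := r) hΨr (1 : G) Δ
  -- assemble
  show mfderiv 𝓘(ℝ, ℝ) J e t (1 : ℝ)
      = (mfderiv I J (fun A' : G => φ A' (e t)) (1 : G)
          (Λ (e t) (ψ B⁻¹ v) - Λ ξ0 (ψ B⁻¹ v)) : E')
        - (mfderiv I J (fun A' : G => φ A' (e t)) (1 : G) Δ : E')
  have hms : mfderiv I J (fun A' : G => φ A' (e t)) (1 : G) (Λ (e t) (ψ B⁻¹ v) - Λ ξ0 (ψ B⁻¹ v))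
      = mfderiv I J (fun A' : G => φ A' (e t)) (1 : G) (Λ (e t) (ψ B⁻¹ v))
        - mfderiv I J (fun A' : G => φ A' (e t)) (1 : G) (Λ ξ0 (ψ B⁻¹ v)) := map_sub _ _ _
  rw [hms, hE1, hE2]; erw [hR, hR, hRδ]; rw [h1, h2, h3, h4, hb1, hb2]
  exact (by intro a b c; abel : ∀ a b c : E', a + (-b + -c) = a - b - c) _ _ _
end
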